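/- Let k be a field of characteristic zero, let n ≥ 1, and let A be an integral domain containing k that is a unique factorization domain, whose fraction field has transcendence degree n+1 over k, and with A* = k*. Let D_1, …, D_n be pairwise commuting locally nilpotent k-derivations of A, linearly independent over A, and let f ∈ A \ k with A^{D_1,…,D_n} = k[f]. Then the set {α ∈ k : D_1, …, D_n are linearly dependent modulo (f − α)} is finite. -/

import Mathlib

open Matrix

section Aux

lemma iter_leibniz' {k A : Type*} [CommRing k] [CommRing A] [Algebra k A]
    (D : Derivation k A A) (a b : A) (m : ℕ) :
    (fun x => D x)^[m] (a * b) =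
      ∑ i ∈ Finset.range (m + 1),
        (m.choose i : A) * ((fun x => D x)^[i] a * (fun x => D x)^[m - i] b) := by
  set d : A → A := fun x => D x with hd
  induction m with
  | zero => simp [hd]
  | succ m ih =>
      rw [Function.iterate_succ_apply', ih]
      show D _ = _
      rw [map_sum]
      have hD : ∀ (c : ℕ) (y : A), D ((c : A) * y) = (c : A) * D y := by
        intro c y
        rw [← nsmul_eq_mul, ← nsmul_eq_mul]; exact map_nsmul D c y
      simp only [hD]
      have hleib : ∀ u v : A, D (u * v) = D u * v + u * D v := by
        intro u v
        rw [D.leibniz]; ring_nf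
      simp only [hleib]
      have hit : ∀ (j : ℕ) (x : A), D (d^[j] x) = d^[j + 1] x := by
        intro j x; rw [Function.iterate_succ_apply']
      simp only [hit, mul_add, Finset.sum_add_distrib]
      -- S1 + S2 = RHS
      have hS1 : ∑ i ∈ Finset.range (m + 1), (m.choose i : A) * (d^[i + 1] a * d^[m - i] b)
          = ∑ i ∈ Finset.range (m + 1), (m.choose i : A) * (d^[i + 1] a * d^[m + 1 - (i + 1)] b) := by
        apply Finset.sum_congr rfl
        intro i hi
        simp
      have hS2 : ∑ i ∈ Finset.range (m + 1), (m.choose i : A) * (d^[i] a * d^[m - i + 1] b)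
          = ∑ i ∈ Finset.range (m + 1), (m.choose i : A) * (d^[i] a * d^[m + 1 - i] b) := by
        apply Finset.sum_congr rfl
        intro i hi
        rw [Finset.mem_range] at hi
        have : m - i + 1 = m + 1 - i := by omega
        rw [this]
      rw [hS1, hS2]
      set t : ℕ → A := fun i => d^[i] a * d^[m + 1 - i] b with ht
      show (∑ i ∈ Finset.range (m + 1), (m.choose i : A) * t (i + 1))
          + (∑ i ∈ Finset.range (m + 1), (m.choose i : A) * t i)
          = ∑ i ∈ Finset.range (m + 2), ((m + 1).choose i : A) * t i
      rw [Finset.sum_range_succ' (fun i => ((m + 1).choose i : A) * t i) (m + 1)]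
      simp only [Nat.choose_succ_succ, Nat.cast_add, add_mul, Finset.sum_add_distrib,
        Nat.choose_zero_right, Nat.cast_one, one_mul]
      rw [Finset.sum_range_succ' (fun i => (m.choose i : A) * t i) m]
      rw [Finset.sum_range_succ (fun i => (m.choose (i + 1) : A) * t (i + 1)) m]
      simp only [Nat.choose_succ_self, Nat.cast_zero, zero_mul, add_zero,
        Nat.choose_zero_right, Nat.cast_one, one_mul]
      ring

lemma lnd_ker_fc' {k A : Type*} [Field k] [CharZero k] [CommRing A] [IsDomain A] [Algebra k A]
    (D : Derivation k A A) (hLN : ∀ a : A, ∃ m : ℕ, 1 ≤ m ∧ (fun x => D x)^[m] a = 0) {a b : A} (ha : a ≠ 0) (hb : b ≠ 0)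
    (hab : D (a * b) = 0) : D a = 0 := by
  have : CharZero A := charZero_of_injective_algebraMap (algebraMap k A).injective
  classical
  set d : A → A := fun x => D x with hd
  have hzero : ∀ t : ℕ, d^[t] (0 : A) = 0 := fun t => Function.iterate_fixed (map_zero D) t
  have hmono : ∀ (x : A) (j t : ℕ), d^[j] x = 0 → d^[j + t] x = 0 := by
    intro x j t h
    rw [add_comm, Function.iterate_add_apply, h, hzero]
  -- maximal nonvanishing index
  have key : ∀ x : A, x ≠ 0 → ∃ p : ℕ, d^[p] x ≠ 0 ∧ ∀ j, p < j → d^[j] x = 0 := by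
    intro x hx
    obtain ⟨m, _, hm⟩ := hLN x
    have hex : ∃ j, d^[j] x = 0 := ⟨m, hm⟩
    set N := Nat.find hex with hN
    have hN0 : d^[N] x = 0 := Nat.find_spec hex
    have hN1 : 1 ≤ N := by
      rcases Nat.eq_zero_or_pos N with h | h
      · exfalso; apply hx; simpa [h] using hN0
      · exact h
    refine ⟨N - 1, Nat.find_min hex (by omega), ?_⟩
    intro j hj
    have : j = N + (j - N) := by omega
    rw [this]; exact hmono x N _ hN0
  obtain ⟨p, hpne, hpv⟩ := key a ha
  obtain ⟨q, hqne, hqv⟩ := key b hb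
  have hab' : ∀ m : ℕ, 1 ≤ m → d^[m] (a * b) = 0 := by
    intro m hm
    have : m = 1 + (m - 1) := by omega
    rw [this, add_comm, Function.iterate_add_apply]
    have : d^[1] (a * b) = 0 := by simpa [hd] using hab
    rw [this, hzero]
  have hL := iter_leibniz' D a b (p + q)
  have hsum : ∑ i ∈ Finset.range (p + q + 1),
      ((p + q).choose i : A) * (d^[i] a * d^[p + q - i] b)
      = ((p + q).choose p : A) * (d^[p] a * d^[q] b) := by
    rw [Finset.sum_eq_single p]
    · congr 2
      simp
    · intro i hi hne
      rcases Nat.lt_or_ge i p with h | h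
      · have : q < p + q - i := by omega
        rw [hqv _ this, mul_zero, mul_zero]
      · have : p < i := by omega
        rw [hpv _ this, zero_mul, mul_zero]
    · intro h
      exfalso; apply h; rw [Finset.mem_range]; omega
  by_contra hDa
  have hp1 : 1 ≤ p := by
    by_contra h
    have : p = 0 := by omega
    apply hDa
    have := hpv 1 (by omega)
    simpa [hd] using this
  have h1 : d^[p + q] (a * b) = 0 := hab' _ (by omega)
  rw [hL, hsum] at h1
  have hchoose : (((p + q).choose p : ℕ) : A) ≠ 0 := by
    exact Nat.cast_ne_zero.mpr (Nat.choose_pos (by omega)).ne'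
  exact (mul_ne_zero hchoose (mul_ne_zero hpne hqne)) h1

lemma exists_det_ne_zero' {k A : Type*} [Field k] [CommRing A] [IsDomain A] [Algebra k A]
    {n : ℕ} (D : Fin n → Derivation k A A)
    (hindep : ∀ a : Fin n → A, (∀ x : A, ∑ i, a i * D i x = 0) → ∀ i, a i = 0) :
    ∃ x : Fin n → A, (Matrix.of fun i j => D i (x j)).det ≠ 0 := by
  classical
  let K := FractionRing A
  let ι : A →+* K := algebraMap A K
  have hι : Function.Injective ι := IsFractionRing.injective A K
  let φ : A → (Fin n → K) := fun x i => ι (D i x)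
  -- span of range φ is ⊤
  have hspan : Submodule.span K (Set.range φ) = ⊤ := by
    by_contra hlt
    obtain ⟨ψ, hψne, hψ⟩ := Submodule.exists_dual_map_eq_bot_of_lt_top
      (lt_top_iff_ne_top.mpr hlt) inferInstance
    set c : Fin n → K := fun i => ψ (fun j => if i = j then 1 else 0) with hc
    obtain ⟨b, hb⟩ := IsLocalization.exist_integer_multiples_of_finite
      (nonZeroDivisors A) c
    choose a ha using hb
    have hrel : ∀ x : A, ∑ i, a i * D i x = 0 := by
      intro x
      apply hι
      rw [map_sum, map_zero]
      have hφx : ψ (φ x) = 0 := by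
        have : φ x ∈ Submodule.span K (Set.range φ) :=
          Submodule.subset_span (Set.mem_range_self x)
        have h0 : ψ (φ x) ∈ Submodule.map ψ (Submodule.span K (Set.range φ)) :=
          Submodule.mem_map_of_mem this
        rw [hψ] at h0
        simpa using h0
      rw [LinearMap.pi_apply_eq_sum_univ ψ (φ x)] at hφx
      have : ι (b : A) * ∑ i, (φ x) i • ψ (fun j => if i = j then 1 else 0) = 0 := by
        rw [hφx, mul_zero]
      rw [Finset.mul_sum] at this
      rw [← this]
      apply Finset.sum_congr rfl
      intro i _
      rw [_root_.map_mul, ha i, Algebra.smul_def]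
      simp only [smul_eq_mul, c, φ]
      ring
    have ha0 : ∀ i, a i = 0 := hindep a hrel
    have hc0 : ∀ i, c i = 0 := by
      intro i
      have := ha i
      rw [ha0 i, map_zero] at this
      have hb0 : ι (b : A) ≠ 0 := (map_ne_zero_iff ι hι).mpr (nonZeroDivisors.coe_ne_zero b)
      have := this.symm
      rw [Algebra.smul_def] at this
      rcases mul_eq_zero.mp this with h | h
      · exact absurd h hb0
      · exact h
    apply hψne
    apply LinearMap.ext
    intro v
    rw [LinearMap.pi_apply_eq_sum_univ ψ v]
    simp only [LinearMap.zero_apply]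
    apply Finset.sum_eq_zero
    intro i _
    rw [show ψ (fun j => if i = j then 1 else 0) = c i from rfl, hc0 i, smul_zero]
  -- extract a basis from range φ
  obtain ⟨t, hts, htspan, htli⟩ := exists_linearIndependent K (Set.range φ)
  rw [hspan] at htspan
  have htfin : t.Finite := htli.setFinite
  have : Fintype t := htfin.fintype
  let bas : Module.Basis t K (Fin n → K) := Module.Basis.mk htli (by rw [Subtype.range_coe, htspan])
  have hcard : Fintype.card t = n := by
    have := Module.finrank_eq_card_basis bas
    simpa [Module.finrank_fin_fun] using this.symm
  let e : Fin n ≃ t := (Fintype.equivFinOfCardEq hcard).symm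
  choose xx hxx using fun j : Fin n => hts (e j).2
  refine ⟨xx, ?_⟩
  set M : Matrix (Fin n) (Fin n) A := Matrix.of fun i j => D i (xx j) with hM
  have hmap : (ι.mapMatrix M) = Matrix.of fun i j => φ (xx j) i := by
    ext i j
    rfl
  have hli2 : LinearIndependent K (fun j : Fin n => φ (xx j)) := by
    have : (fun j : Fin n => φ (xx j)) = (fun j => ((e j : Fin n → K))) := by
      funext j; exact hxx j
    rw [this]
    have h2 := bas.linearIndependent.comp e e.injective
    have h3 : ⇑bas ∘ ⇑e = fun j => ((e j : Fin n → K)) := by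
      funext j
      simp [bas, Module.Basis.mk_apply, Function.comp]
    rwa [h3] at h2
  have hunit : IsUnit (ι.mapMatrix M) := by
    rw [← Matrix.linearIndependent_cols_iff_isUnit]
    have : (fun j : Fin n => (ι.mapMatrix M)ᵀ j) = fun j => φ (xx j) := by
      funext j; ext i; rw [hmap]; rfl
    change LinearIndependent K (fun j : Fin n => (ι.mapMatrix M)ᵀ j)
    rw [this]
    exact hli2
  have : IsUnit (ι.mapMatrix M).det := (Matrix.isUnit_iff_isUnit_det _).mp hunit
  intro hdet
  rw [← RingHom.map_det] at this
  rw [hdet, map_zero] at this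
  exact not_isUnit_zero this

end Aux

/-- A derivation is locally nilpotent if every element is killed by some iterate. -/
def Derivation.IsLocallyNilpotent {k A : Type*} [CommRing k] [CommRing A] [Algebra k A]
    (D : Derivation k A A) : Prop :=
  ∀ a : A, ∃ m : ℕ, 1 ≤ m ∧ (fun x => D x)^[m] a = 0

/-- A family of derivations is linearly independent modulo an ideal `I` if any `A`-linear
combination of them taking all its values in `I` has all coefficients in `I`. -/
def LinIndepModulo {k A : Type*} [CommRing k] [CommRing A] [Algebra k A] {n : ℕ}
    (D : Fin n → Derivation k A A) (I : Ideal A) : Prop :=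
  ∀ a : Fin n → A, (∀ x : A, ∑ i, a i * D i x ∈ I) → ∀ i, a i ∈ I

theorem statement8 (k : Type*) [Field k] [CharZero k] (n : ℕ) (hn : 1 ≤ n)
    (A : Type*) [CommRing A] [IsDomain A] [UniqueFactorizationMonoid A] [Algebra k A]
    (htrdeg : ∃ b : Fin (n + 1) → FractionRing A, IsTranscendenceBasis k b)
    (hunits : ∀ a : A, IsUnit a → ∃ c : k, algebraMap k A c = a)
    (D : Fin n → Derivation k A A)
    (hLN : ∀ i, (D i).IsLocallyNilpotent)
    (hcomm : ∀ i j, ∀ x : A, D i (D j x) = D j (D i x))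
    (hindep : ∀ a : Fin n → A,
      (∀ x : A, ∑ i, a i * D i x = 0) → ∀ i, a i = 0)
    (f : A) (hf : f ∉ (algebraMap k A).range)
    (hker : {a : A | ∀ i, D i a = 0} = (Algebra.adjoin k {f} : Subalgebra k A))
    :
    {α : k | ¬ LinIndepModulo D (Ideal.span {f - algebraMap k A α})}.Finite := by
  classical
  have hinj : Function.Injective (algebraMap k A) := (algebraMap k A).injective
  have hf0 : f ≠ 0 := fun h => hf ⟨0, by simp [h]⟩
  have htrans : Transcendental k f := by
    intro halg
    obtain ⟨c, hc⟩ := hunits f ((halg.isIntegral).isUnit hf0)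
    exact hf ⟨c, hc⟩
  have hDf : ∀ i, D i f = 0 := by
    have : f ∈ {a : A | ∀ i, D i a = 0} := by
      rw [hker]
      exact Algebra.self_mem_adjoin_singleton k f
    exact this
  have hfα : ∀ α : k, f - algebraMap k A α ∉ (algebraMap k A).range := by
    rintro α ⟨c, hc⟩
    exact hf ⟨c + α, by rw [map_add, hc]; ring⟩
  have hfα0 : ∀ α : k, f - algebraMap k A α ≠ 0 := by
    intro α h
    exact hfα α ⟨0, by rw [map_zero, h]⟩
  -- every f - α is prime
  have hprime : ∀ α : k, Prime (f - algebraMap k A α) := by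
    intro α
    rw [← UniqueFactorizationMonoid.irreducible_iff_prime]
    constructor
    · intro hu
      obtain ⟨c, hc⟩ := hunits _ hu
      exact hfα α ⟨c, hc⟩
    · intro g h hgh
      by_contra hcon
      push_neg at hcon
      obtain ⟨hgu, hhu⟩ := hcon
      have hgh0 : g * h ≠ 0 := by rw [← hgh]; exact hfα0 α
      have hg0 : g ≠ 0 := fun h0 => hgh0 (by rw [h0, zero_mul])
      have hh0 : h ≠ 0 := fun h0 => hgh0 (by rw [h0, mul_zero])
      have hDgh : ∀ i, D i (g * h) = 0 := by
        intro i
        rw [← hgh, map_sub, hDf i, Derivation.map_algebraMap, sub_zero]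
      have hDg : ∀ i, D i g = 0 := fun i => lnd_ker_fc' (D i) (hLN i) hg0 hh0 (hDgh i)
      have hDh : ∀ i, D i h = 0 := by
        intro i
        refine lnd_ker_fc' (D i) (hLN i) hh0 hg0 ?_
        rw [mul_comm]; exact hDgh i
      have hgadj : g ∈ (Polynomial.aeval f : Polynomial k →ₐ[k] A).range := by
        rw [← Algebra.adjoin_singleton_eq_range_aeval]
        have : g ∈ {a : A | ∀ i, D i a = 0} := hDg
        rwa [hker] at this
      have hhadj : h ∈ (Polynomial.aeval f : Polynomial k →ₐ[k] A).range := by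
        rw [← Algebra.adjoin_singleton_eq_range_aeval]
        have : h ∈ {a : A | ∀ i, D i a = 0} := hDh
        rwa [hker] at this
      obtain ⟨G, hG⟩ := hgadj
      obtain ⟨H, hH⟩ := hhadj
      have hG' : Polynomial.aeval f G = g := hG
      have hH' : Polynomial.aeval f H = h := hH
      have hev : Polynomial.aeval f (G * H - (Polynomial.X - Polynomial.C α)) = 0 := by
        rw [map_sub, _root_.map_mul, hG', hH', map_sub, Polynomial.aeval_X,
          Polynomial.aeval_C, ← hgh]
        ring
      have hGH : G * H = Polynomial.X - Polynomial.C α := by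
        have := transcendental_iff.mp htrans _ hev
        exact sub_eq_zero.mp this
      have hG0 : G ≠ 0 := fun h0 => hg0 (by rw [← hG', h0, map_zero])
      have hH0 : H ≠ 0 := fun h0 => hh0 (by rw [← hH', h0, map_zero])
      have hdeg : G.natDegree + H.natDegree = 1 := by
        rw [← Polynomial.natDegree_mul hG0 hH0, hGH, Polynomial.natDegree_X_sub_C]
      have hcases : G.natDegree = 0 ∨ H.natDegree = 0 := by omega
      rcases hcases with hcase | hcase
      · apply hgu
        have hGC : G = Polynomial.C (G.coeff 0) := Polynomial.eq_C_of_natDegree_eq_zero hcase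
        have hgC : g = algebraMap k A (G.coeff 0) := by
          rw [← hG', hGC, Polynomial.aeval_C]
          simp
        have hc0 : G.coeff 0 ≠ 0 := by
          intro h0
          apply hg0
          rw [hgC, h0, map_zero]
        rw [hgC]
        exact (isUnit_iff_ne_zero.mpr hc0).map (algebraMap k A)
      · apply hhu
        have hHC : H = Polynomial.C (H.coeff 0) := Polynomial.eq_C_of_natDegree_eq_zero hcase
        have hhC : h = algebraMap k A (H.coeff 0) := by
          rw [← hH', hHC, Polynomial.aeval_C]
          simp
        have hc0 : H.coeff 0 ≠ 0 := by
          intro h0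
          apply hh0
          rw [hhC, h0, map_zero]
        rw [hhC]
        exact (isUnit_iff_ne_zero.mpr hc0).map (algebraMap k A)
  -- determinant
  obtain ⟨xx, hdet⟩ := exists_det_ne_zero' D hindep
  set M : Matrix (Fin n) (Fin n) A := Matrix.of fun i j => D i (xx j) with hMdef
  set g : A := M.det with hgdef
  have hg0 : g ≠ 0 := hdet
  -- every bad α gives a divisor of g
  have hkey : ∀ α : k, ¬ LinIndepModulo D (Ideal.span {f - algebraMap k A α}) →
      (f - algebraMap k A α) ∣ g := by
    intro α hα
    by_contra hdvd
    apply hα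
    intro a ha i
    set I := Ideal.span {f - algebraMap k A α} with hI
    have hIprime : I.IsPrime := (Ideal.span_singleton_prime (hfα0 α)).mpr (hprime α)
    have hb : ∀ j, (Mᵀ.mulVec a) j ∈ I := by
      intro j
      have hbj : (Mᵀ.mulVec a) j = ∑ i, a i * D i (xx j) := by
        simp only [Matrix.mulVec, dotProduct, Matrix.transpose_apply, hMdef,
          Matrix.of_apply]
        exact Finset.sum_congr rfl fun i _ => mul_comm _ _
      rw [hbj]
      exact ha (xx j)
    have hga : g * a i ∈ I := by
      have h1 : (Matrix.adjugate Mᵀ * Mᵀ).mulVec a = Mᵀ.det • a := by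
        rw [Matrix.adjugate_mul, Matrix.smul_mulVec, Matrix.one_mulVec]
      have h2 : (Matrix.adjugate Mᵀ).mulVec (Mᵀ.mulVec a) = Mᵀ.det • a := by
        rw [Matrix.mulVec_mulVec, h1]
      have h3 : g * a i = ((Matrix.adjugate Mᵀ).mulVec (Mᵀ.mulVec a)) i := by
        rw [h2, Pi.smul_apply, smul_eq_mul, Matrix.det_transpose]
      rw [h3]
      show ∑ j, (Matrix.adjugate Mᵀ) i j * (Mᵀ.mulVec a) j ∈ I
      exact Ideal.sum_mem I fun j _ => I.mul_mem_left _ (hb j)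
    rcases hIprime.mem_or_mem hga with h | h
    · exact absurd (Ideal.mem_span_singleton.mp h) hdvd
    · exact h
  -- finiteness via prime factors of g
  set S := {α : k | ¬ LinIndepModulo D (Ideal.span {f - algebraMap k A α})} with hS
  have hexq : ∀ α ∈ S, ∃ q ∈ UniqueFactorizationMonoid.factors g,
      Associated (f - algebraMap k A α) q := fun α hα =>
    UniqueFactorizationMonoid.exists_mem_factors_of_dvd hg0 (hprime α).irreducible (hkey α hα)
  set F : k → A := fun α => if hα : α ∈ S then (hexq α hα).choose else 0 with hF
  have hFmem : ∀ α ∈ S, F α ∈ (UniqueFactorizationMonoid.factors g).toFinset := by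
    intro α hα
    rw [hF]; simp only [dif_pos hα]
    rw [Multiset.mem_toFinset]
    exact (hexq α hα).choose_spec.1
  have hFas : ∀ α ∈ S, Associated (f - algebraMap k A α) (F α) := by
    intro α hα
    rw [hF]; simp only [dif_pos hα]
    exact (hexq α hα).choose_spec.2
  have hFinjOn : Set.InjOn F S := by
    intro α hα β hβ hEq
    have hassoc : Associated (f - algebraMap k A α) (f - algebraMap k A β) :=
      (hFas α hα).trans (hEq ▸ (hFas β hβ)).symm
    obtain ⟨u, hu⟩ := hassoc
    obtain ⟨c, hc⟩ := hunits (u : A) u.isUnit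
    rw [← hc] at hu
    by_cases hc1 : c = 1
    · rw [hc1, _root_.map_one, mul_one] at hu
      have heq : algebraMap k A α = algebraMap k A β := by linear_combination -hu
      exact hinj heq
    · exfalso
      apply hf
      refine ⟨(c - 1)⁻¹ * (α * c - β), ?_⟩
      have key : f * algebraMap k A (c - 1) = algebraMap k A (α * c - β) := by
        rw [map_sub, map_sub, _root_.map_mul, _root_.map_one]
        linear_combination hu
      have hcu : IsUnit (algebraMap k A (c - 1)) := by
        refine (isUnit_iff_ne_zero.mpr ?_).map (algebraMap k A)
        intro h0; exact hc1 (by linear_combination h0)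
      have hcinv : (c - 1) ≠ 0 := fun h0 => hc1 (by linear_combination h0)
      rw [_root_.map_mul]
      calc algebraMap k A (c - 1)⁻¹ * algebraMap k A (α * c - β)
          = algebraMap k A (c - 1)⁻¹ * (f * algebraMap k A (c - 1)) := by rw [key]
        _ = f * (algebraMap k A ((c - 1)⁻¹ * (c - 1))) := by rw [_root_.map_mul]; ring
        _ = f := by rw [inv_mul_cancel₀ hcinv, _root_.map_one, mul_one]
  have himg : (F '' S).Finite :=
    Set.Finite.subset (UniqueFactorizationMonoid.factors g).toFinset.finite_toSet
      (by rintro _ ⟨α, hα, rfl⟩; exact hFmem α hα)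
  exact Set.Finite.of_finite_image himg hFinjOn
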